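/- Let n be a natural number with n ≡ 0 (mod 8). For 0 ≤ k ≤ n/2 define the rational numbers c_k by: c_k = 0 if k is odd, and c_k = 2·(−1)^(k/2) · (∏_{λ=0}^{k/2−1} (n² − (4λ)²)) / (4^k · k!) if k is even (the product being empty, hence 1, when k = 0). Then every c_k is an integer, and for all complex numbers x, y: x^n + y^n = ∑_{k=0}^{n/2} c_k · (x·y)^(n/2 − k) · (x² + y²)^k. -/

import Mathlib

private def gg : ℕ → ℕ → ℤ
  | 0, j => if j = 0 then 2 else 0
  | 1, j => if j = 0 then 1 else 0
  | (m+2), j => gg (m+1) j - (if j = 0 then 0 else gg m (j-1))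

private lemma gg_vanish : ∀ m j : ℕ, m < 2 * j → gg m j = 0 := by
  intro m
  induction m using Nat.twoStepInduction with
  | zero =>
    intro j h
    have hj : j ≠ 0 := by omega
    simp [gg, hj]
  | one =>
    intro j h
    have hj : j ≠ 0 := by omega
    simp [gg, hj]
  | more m ih1 ih2 =>
    intro j h
    have hj : j ≠ 0 := by omega
    rw [show gg (m+2) j = gg (m+1) j - (if j = 0 then 0 else gg m (j-1)) from rfl]
    rw [ih2 j (by omega), ih1 (j-1) (by omega)]
    simp

private lemma sum_gg : ∀ (m : ℕ) (x y : ℂ), x^(2*m) + y^(2*m) =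
    ∑ j ∈ Finset.range (m+1), (gg m j : ℂ) * (x*y)^(2*j) * (x^2+y^2)^(m - 2*j) := by
  intro m
  induction m using Nat.twoStepInduction with
  | zero => intro x y; simp [gg]; norm_num
  | one =>
    intro x y
    rw [Finset.sum_range_succ, Finset.sum_range_one]
    show x^2 + y^2 = (gg 1 0 : ℂ) * _ * _ + (gg 1 1 : ℂ) * _ * _
    norm_num [gg]
  | more m ih1 ih2 =>
    intro x y
    have hrec : x^(2*(m+2)) + y^(2*(m+2)) =
        (x^2+y^2) * (x^(2*(m+1)) + y^(2*(m+1))) - (x*y)^2 * (x^(2*m) + y^(2*m)) := by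
      ring
    rw [hrec, ih1 x y, ih2 x y]
    -- first sum
    have h1 : (x^2+y^2) * ∑ j ∈ Finset.range (m+2),
        (gg (m+1) j : ℂ) * (x*y)^(2*j) * (x^2+y^2)^((m+1) - 2*j)
        = ∑ j ∈ Finset.range (m+2),
        (gg (m+1) j : ℂ) * (x*y)^(2*j) * (x^2+y^2)^((m+2) - 2*j) := by
      rw [Finset.mul_sum]
      refine Finset.sum_congr rfl ?_
      intro j hj
      rcases le_or_gt (2*j) (m+1) with h | h
      · have he : (m+2) - 2*j = ((m+1) - 2*j) + 1 := by omega
        rw [he, pow_succ]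
        ring
      · rw [gg_vanish (m+1) j (by omega)]
        simp
    -- second sum
    have h2 : (x*y)^2 * ∑ j ∈ Finset.range (m+1),
        (gg m j : ℂ) * (x*y)^(2*j) * (x^2+y^2)^(m - 2*j)
        = ∑ j ∈ Finset.range (m+2),
        (Int.cast (if j = 0 then (0:ℤ) else gg m (j-1)) : ℂ) * (x*y)^(2*j) * (x^2+y^2)^((m+2) - 2*j) := by
      have hs := Finset.sum_range_succ' (fun j => (Int.cast (if j = 0 then (0:ℤ) else gg m (j-1)) : ℂ) * (x*y)^(2*j) * (x^2+y^2)^((m+2) - 2*j)) (m+1)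
      rw [show m+1+1 = m+2 from rfl] at hs
      rw [hs]
      simp only [Nat.succ_ne_zero, if_false, ite_true, ite_false, if_true, reduceIte,
        Int.cast_zero, zero_mul, add_zero, Nat.add_sub_cancel]
      rw [Finset.mul_sum]
      refine Finset.sum_congr rfl ?_
      intro j hj
      have he : (m+2) - 2*(j+1) = m - 2*j := by omega
      have he2 : 2*(j+1) = 2*j + 2 := by ring
      rw [he, he2, pow_add]
      ring
    rw [h1, h2, ← Finset.sum_sub_distrib]
    rw [Finset.sum_range_succ _ (m+2)]
    rw [show gg (m+2) (m+2) = 0 from gg_vanish _ _ (by omega)]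
    simp only [Int.cast_zero, zero_mul, add_zero]
    refine (Finset.sum_congr rfl ?_).symm
    intro j hj
    rw [show gg (m+2) j = gg (m+1) j - (if j = 0 then 0 else gg m (j-1)) from rfl]
    push_cast
    ring

private def hh : ℕ → ℕ → ℤ
  | m, 0 => if m = 0 then 2 else 1
  | m, (j+1) => ((m - (j+1)).choose (j+1) : ℤ) + ((m - (j+2)).choose j : ℤ)

private lemma gg_closed : ∀ m j : ℕ, 2 * j ≤ m → gg m j = (-1)^j * hh m j := by
  intro m
  induction m using Nat.twoStepInduction with
  | zero =>
    intro j h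
    have hj : j = 0 := by omega
    subst hj
    simp [gg, hh]
  | one =>
    intro j h
    have hj : j = 0 := by omega
    subst hj
    simp [gg, hh]
  | more m ih1 ih2 =>
    intro j h
    match j with
    | 0 =>
      rw [show gg (m+2) 0 = gg (m+1) 0 - (if (0:ℕ) = 0 then 0 else gg m (0-1)) from rfl]
      rw [ih2 0 (by omega)]
      simp [hh]
    | j+1 =>
      rw [show gg (m+2) (j+1) = gg (m+1) (j+1)
            - (if j+1 = 0 then 0 else gg m (j+1-1)) from rfl]
      rw [if_neg (Nat.succ_ne_zero j), Nat.add_sub_cancel]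
      rw [ih1 j (by omega)]
      rcases le_or_gt (2*(j+1)) (m+1) with hle | hlt
      · rw [ih2 (j+1) hle]
        have key : hh (m+2) (j+1) = hh (m+1) (j+1) + hh m j := by
          match j with
          | 0 =>
            obtain ⟨a, rfl⟩ : ∃ a, m = a + 1 := ⟨m - 1, by omega⟩
            show ((a+3-1).choose 1 : ℤ) + ((a+3-2).choose 0 : ℤ)
              = (((a+2-1).choose 1 : ℤ) + ((a+2-2).choose 0 : ℤ)) + hh (a+1) 0
            rw [show hh (a+1) 0 = 1 from by simp [hh]]
            rw [show a+3-1 = a+2 from by omega, show a+3-2 = a+1 from by omega,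
              show a+2-1 = a+1 from by omega, show a+2-2 = a from by omega]
            simp [Nat.choose_one_right]
            push_cast
            ring
          | b+1 =>
            obtain ⟨a, ha, rfl⟩ : ∃ a, b + 1 ≤ a ∧ m = a + b + 2 :=
              ⟨m - b - 2, by omega, by omega⟩
            show ((a+b+4-(b+2)).choose (b+2) : ℤ) + ((a+b+4-(b+3)).choose (b+1) : ℤ)
              = (((a+b+3-(b+2)).choose (b+2) : ℤ) + ((a+b+3-(b+3)).choose (b+1) : ℤ))
              + (((a+b+2-(b+1)).choose (b+1) : ℤ) + ((a+b+2-(b+2)).choose b : ℤ))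
            rw [show a+b+4-(b+2) = a+2 from by omega, show a+b+4-(b+3) = a+1 from by omega,
              show a+b+3-(b+2) = a+1 from by omega, show a+b+3-(b+3) = a from by omega,
              show a+b+2-(b+1) = a+1 from by omega, show a+b+2-(b+2) = a from by omega]
            have p1 : (a+2).choose (b+2) = (a+1).choose (b+1) + (a+1).choose (b+2) :=
              Nat.choose_succ_succ (a+1) (b+1)
            have p2 : (a+1).choose (b+1) = a.choose b + a.choose (b+1) :=
              Nat.choose_succ_succ a b
            rw [p1]
            push_cast [p2]
            ring
        rw [key]
        push_cast
        ring
      · have hm : m = 2*j := by omega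
        rw [gg_vanish (m+1) (j+1) (by omega)]
        have h2 : hh (m+2) (j+1) = 2 := by
          show ((m+2-(j+1)).choose (j+1) : ℤ) + ((m+2-(j+2)).choose j : ℤ) = 2
          rw [show m+2-(j+1) = j+1 from by omega, show m+2-(j+2) = j from by omega]
          simp
        have h3 : hh m j = 2 := by
          subst hm
          match j with
          | 0 => simp [hh]
          | b+1 =>
            show ((2*(b+1)-(b+1)).choose (b+1) : ℤ) + ((2*(b+1)-(b+2)).choose b : ℤ) = 2
            rw [show 2*(b+1)-(b+1) = b+1 from by omega, show 2*(b+1)-(b+2) = b from by omega]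
            simp
        rw [h2, h3]
        ring

private lemma lemA (ν : ℕ) : ∀ t, t ≤ ν + 1 →
    (∏ l ∈ Finset.range t, (((ν:ℚ)+1)^2 - (l:ℚ)^2)) * ((ν+1-t).factorial : ℚ) *
      (ν.factorial : ℚ) = ((ν+1).factorial : ℚ) * ((ν+t).factorial : ℚ) := by
  intro t
  induction t with
  | zero => simp
  | succ t ih =>
    intro ht
    have ht' : t ≤ ν := by omega
    have IH := ih (by omega)
    rw [Finset.prod_range_succ]
    have e1 : ν + 1 - (t+1) = ν - t := by omega
    have e2 : ((ν+1-t).factorial : ℚ) = (((ν-t : ℕ) : ℚ)+1) * ((ν-t).factorial : ℚ) := by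
      rw [show ν+1-t = (ν-t)+1 from by omega, Nat.factorial_succ]
      push_cast
      ring
    have e3 : ((ν+(t+1)).factorial : ℚ) = ((ν:ℚ)+t+1) * ((ν+t).factorial : ℚ) := by
      rw [show ν+(t+1) = (ν+t)+1 from by omega, Nat.factorial_succ]
      push_cast
      ring
    have e4 : ((ν-t : ℕ) : ℚ) = (ν:ℚ) - t := by
      push_cast [Nat.cast_sub ht']
      ring
    have e5 : ((ν:ℚ)+1)^2 - (t:ℚ)^2 = ((ν:ℚ)+1+t) * (((ν-t : ℕ) : ℚ)+1) := by
      rw [e4]; ring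
    rw [e1, e3, e5]
    rw [e2] at IH
    linear_combination ((ν:ℚ)+1+(t:ℚ)) * IH

private lemma lemB (w t : ℕ) : ((2*t).factorial : ℚ) * (((w+1).factorial : ℕ) : ℚ) *
    (((w+1+2*t).choose (2*t) : ℚ) + ((w+2*t).choose (2*t) : ℚ)) * ((w+t).factorial : ℚ)
    = 2 * ((w+t+1).factorial : ℚ) * ((w+2*t).factorial : ℚ) := by
  have d1 : ((w+1+2*t).choose (2*t)) * (2*t).factorial * (w+1).factorial = (w+1+2*t).factorial := by
    have := Nat.choose_mul_factorial_mul_factorial (show 2*t ≤ w+1+2*t by omega)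
    rwa [show w+1+2*t - 2*t = w+1 from by omega] at this
  have d2 : ((w+2*t).choose (2*t)) * (2*t).factorial * w.factorial = (w+2*t).factorial := by
    have := Nat.choose_mul_factorial_mul_factorial (show 2*t ≤ w+2*t by omega)
    rwa [show w+2*t - 2*t = w from by omega] at this
  have d1' : (((w+1+2*t).choose (2*t) : ℚ)) * ((2*t).factorial : ℚ) * ((w+1).factorial : ℚ)
      = ((w+1+2*t).factorial : ℚ) := by exact_mod_cast congrArg (Nat.cast : ℕ → ℚ) d1
  have d2' : (((w+2*t).choose (2*t) : ℚ)) * ((2*t).factorial : ℚ) * ((w).factorial : ℚ)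
      = ((w+2*t).factorial : ℚ) := by exact_mod_cast congrArg (Nat.cast : ℕ → ℚ) d2
  have e3 : ((w+1).factorial : ℚ) = ((w:ℚ)+1) * (w.factorial : ℚ) := by
    rw [Nat.factorial_succ]; push_cast; ring
  have e4 : ((w+t+1).factorial : ℚ) = ((w:ℚ)+t+1) * ((w+t).factorial : ℚ) := by
    rw [Nat.factorial_succ]; push_cast; ring
  have e5 : ((w+1+2*t).factorial : ℚ) = ((w:ℚ)+1+2*t) * ((w+2*t).factorial : ℚ) := by
    rw [show w+1+2*t = (w+2*t)+1 from by omega, Nat.factorial_succ]; push_cast; ring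
  rw [e3, e4] ; rw [e3, e5] at d1'
  linear_combination ((w+t).factorial : ℚ) * d1' + (((w:ℚ)+1) * ((w+t).factorial : ℚ)) * d2'

private lemma key5 (μ t : ℕ) (ht : t ≤ μ) :
    2 * (∏ l ∈ Finset.range t, ((μ:ℚ)^2 - (l:ℚ)^2)) =
    ((2*t).factorial : ℚ) * ((hh (2*μ) (μ - t) : ℤ) : ℚ) := by
  match t with
  | 0 =>
    have hval : hh (2*μ) μ = 2 := by
      match μ with
      | 0 => simp [hh]
      | b+1 =>
        show ((2*(b+1) - (b+1)).choose (b+1) : ℤ) + ((2*(b+1) - (b+2)).choose b : ℤ) = 2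
        rw [show 2*(b+1)-(b+1) = b+1 from by omega, show 2*(b+1)-(b+2) = b from by omega]
        simp
    simp [hval]
  | t+1 =>
    obtain ⟨ν, rfl⟩ : ∃ ν, μ = ν + 1 := ⟨μ - 1, by omega⟩
    have hA := lemA ν (t+1) ht
    have hne1 : ((ν+1-(t+1)).factorial : ℚ) ≠ 0 := Nat.cast_ne_zero.2 (Nat.factorial_ne_zero _)
    have hne2 : ((ν).factorial : ℚ) ≠ 0 := Nat.cast_ne_zero.2 (Nat.factorial_ne_zero _)
    rcases eq_or_lt_of_le ht with heq | hlt
    · -- t + 1 = ν + 1, i.e. t = ν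
      have htν : t = ν := by omega
      subst htν
      have hval : (hh (2*(t+1)) ((t+1) - (t+1)) : ℤ) = 1 := by
        rw [Nat.sub_self]
        show (if 2*(t+1) = 0 then (2:ℤ) else 1) = 1
        rw [if_neg (by omega)]
      rw [hval]
      -- 2 * P = (2(t+1))!
      rw [Nat.sub_self] at hA
      simp only [Nat.factorial_zero, Nat.cast_one, mul_one] at hA
      have e1 : ((2*(t+1)).factorial : ℚ) = (2*(t:ℚ)+2) * ((t+(t+1)).factorial : ℚ) := by
        rw [show 2*(t+1) = (t+(t+1))+1 from by omega, Nat.factorial_succ]; push_cast; ring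
      have e2 : (((t+1)).factorial : ℚ) = ((t:ℚ)+1) * ((t).factorial : ℚ) := by
        rw [Nat.factorial_succ]; push_cast; ring
      rw [e2] at hA
      rw [e1]
      apply mul_right_cancel₀ hne2
      push_cast at hA ⊢
      linear_combination 2 * hA
    · -- t + 1 ≤ ν, set w = ν - (t+1)
      obtain ⟨w, rfl⟩ : ∃ w, ν = w + (t + 1) := ⟨ν - (t+1), by omega⟩
      have hval : (hh (2*((w+(t+1))+1)) (((w+(t+1))+1) - (t+1)) : ℤ)
          = ((w+1+2*(t+1)).choose (2*(t+1)) : ℤ) + ((w+2*(t+1)).choose (2*(t+1)) : ℤ) := by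
        rw [show ((w+(t+1))+1) - (t+1) = w + 1 from by omega]
        show ((2*((w+(t+1))+1) - (w+1)).choose (w+1) : ℤ)
            + ((2*((w+(t+1))+1) - (w+2)).choose w : ℤ) = _
        rw [show 2*((w+(t+1))+1) - (w+1) = w+1+2*(t+1) from by omega,
            show 2*((w+(t+1))+1) - (w+2) = w+2*(t+1) from by omega]
        have s1 : (w+1+2*(t+1)).choose (w+1) = (w+1+2*(t+1)).choose (2*(t+1)) := by
          have := Nat.choose_symm (show 2*(t+1) ≤ w+1+2*(t+1) by omega)
          rwa [show w+1+2*(t+1) - 2*(t+1) = w+1 from by omega] at this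
        have s2 : (w+2*(t+1)).choose w = (w+2*(t+1)).choose (2*(t+1)) := by
          have := Nat.choose_symm (show 2*(t+1) ≤ w+2*(t+1) by omega)
          rwa [show w+2*(t+1) - 2*(t+1) = w from by omega] at this
        rw [s1, s2]
      rw [hval]
      have hB := lemB w (t+1)
      rw [show (w+(t+1))+1-(t+1) = w+1 from by omega] at hA
      rw [show w+(t+1)+(t+1) = w+2*(t+1) from by omega] at hA
      have hne3 : ((w+1).factorial : ℚ) ≠ 0 := Nat.cast_ne_zero.2 (Nat.factorial_ne_zero _)
      have hne4 : ((w+(t+1)).factorial : ℚ) ≠ 0 := Nat.cast_ne_zero.2 (Nat.factorial_ne_zero _)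
      apply mul_right_cancel₀ (mul_ne_zero hne3 hne4)
      push_cast at hA hB ⊢
      linear_combination 2 * hA - hB

private lemma sum_even (f : ℕ → ℂ) : ∀ μ : ℕ, (∀ i, 2*i+1 < 2*μ+1 → f (2*i+1) = 0) →
    ∑ k ∈ Finset.range (2*μ+1), f k = ∑ t ∈ Finset.range (μ+1), f (2*t) := by
  intro μ
  induction μ with
  | zero => intro _; simp
  | succ μ ih =>
    intro hodd
    have h1 : 2*(μ+1)+1 = (2*μ+1) + 1 + 1 := by omega
    rw [h1, Finset.sum_range_succ, Finset.sum_range_succ,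
      ih (fun i hi => hodd i (by omega)), hodd μ (by omega),
      Finset.sum_range_succ (fun x => f (2*x)) (μ+1),
      show 2*μ+1+1 = 2*(μ+1) from by omega]
    ring

/-- The case `n ≡ 0 (mod 8)` of the Eight Levels Theorem. -/
theorem eight_levels_mod8_zero (n : ℕ) (hn : n % 8 = 0) (c : ℕ → ℚ)
    (hc_odd : ∀ k ≤ n / 2, k % 2 = 1 → c k = 0)
    (hc_even : ∀ k ≤ n / 2, k % 2 = 0 →
      c k = 2 * (-1 : ℚ) ^ (k / 2) *
        (∏ l ∈ Finset.range (k / 2), ((n : ℚ) ^ 2 - (4 * (l : ℚ)) ^ 2)) /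
        (4 ^ k * (Nat.factorial k : ℚ))) :
    (∀ k ≤ n / 2, ∃ z : ℤ, c k = (z : ℚ)) ∧
    ∀ x y : ℂ, x ^ n + y ^ n =
      ∑ k ∈ Finset.range (n / 2 + 1),
        (c k : ℂ) * (x * y) ^ (n / 2 - k) * (x ^ 2 + y ^ 2) ^ k := by
  obtain ⟨ν, rfl⟩ : ∃ ν, n = 8 * ν := ⟨n / 8, by omega⟩
  set μ := 2 * ν with hμ
  have hm : 8 * ν / 2 = 2 * μ := by omega
  have hcval : ∀ t ≤ μ, c (2*t) = ((-1:ℚ))^t * ((hh (2*μ) (μ - t) : ℤ) : ℚ) := by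
    intro t htμ
    have h1 := hc_even (2*t) (by omega) (by omega)
    rw [show (2*t)/2 = t from by omega] at h1
    rw [h1]
    have h3 : ∀ l ∈ Finset.range t, ((8*ν : ℕ) : ℚ)^2 - (4*(l:ℚ))^2
        = 16 * (((μ : ℕ):ℚ)^2 - (l:ℚ)^2) := by
      intro l _
      rw [hμ]
      push_cast
      ring
    rw [Finset.prod_congr rfl h3, Finset.prod_mul_distrib, Finset.prod_const,
      Finset.card_range]
    have h5 := key5 μ t htμ
    have h6 : (4:ℚ)^(2*t) = 16^t := by rw [pow_mul]; norm_num
    rw [h6]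
    have hfac : ((2*t).factorial : ℚ) ≠ 0 := Nat.cast_ne_zero.2 (Nat.factorial_ne_zero _)
    have h16 : (16:ℚ)^t ≠ 0 := pow_ne_zero _ (by norm_num)
    field_simp
    linear_combination h5
  constructor
  · intro k hk
    rcases Nat.even_or_odd k with ⟨t, htk⟩ | hodd
    · refine ⟨(-1)^t * hh (2*μ) (μ - t), ?_⟩
      rw [show k = 2*t from by omega, hcval t (by omega)]
      push_cast
      ring
    · obtain ⟨t, htk⟩ := hodd
      refine ⟨0, ?_⟩
      rw [hc_odd k hk (by omega)]
      norm_num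
  · intro x y
    rw [hm, show 8*ν = 2*(2*μ) from by omega]
    rw [sum_gg (2*μ) x y]
    rw [sum_even (fun k => (c k : ℂ) * (x * y) ^ (2*μ - k) * (x ^ 2 + y ^ 2) ^ k) μ
      (by
        intro i hi
        have : c (2*i+1) = 0 := hc_odd (2*i+1) (by omega) (by omega)
        simp [this])]
    rw [← Finset.sum_subset (Finset.range_subset_range.2 (show μ+1 ≤ 2*μ+1 by omega))
      (by
        intro j _ hj
        rw [gg_vanish (2*μ) j (by
          simp only [Finset.mem_range] at hj
          omega)]
        simp)]
    rw [← Finset.sum_range_reflect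
      (fun j => (gg (2*μ) j : ℂ) * (x*y)^(2*j) * (x^2+y^2)^(2*μ - 2*j)) (μ+1)]
    refine Finset.sum_congr rfl ?_
    intro t htm
    simp only [Finset.mem_range] at htm
    have ht : t ≤ μ := by omega
    simp only [Nat.add_sub_cancel]
    rw [gg_closed (2*μ) (μ - t) (by omega)]
    rw [hcval t ht]
    have hsign : ((-1:ℂ))^(μ - t) = (-1)^t := by
      have h1 : ((-1:ℂ))^(μ-t) * (-1)^t = 1 := by
        rw [← pow_add, show μ - t + t = 2*ν from by omega, pow_mul]
        norm_num
      have h2 : ((-1:ℂ))^t * (-1)^t = 1 := by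
        rw [← pow_add, ← two_mul, pow_mul]
        norm_num
      exact mul_right_cancel₀ (pow_ne_zero t (by norm_num : (-1:ℂ) ≠ 0)) (h1.trans h2.symm)
    rw [show 2*(μ-t) = 2*μ - 2*t from by omega, show 2*μ - (2*μ - 2*t) = 2*t from by omega]
    push_cast [hsign]
    ring
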